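/- Let (T_m)_m be a sequence of meshes of [0,1] with mesh sizes h_m → 0, and for each m let w_{h_m} ∈ H_{T_m} be a piecewise constant function. If (w_{h_m})_m converges to some w strongly in L²(0,1) and the dual norms ‖w_{h_m}‖_{−1,2,T_m} converge to 0 as m → ∞, then w = 0 (as an element of L²(0,1)). -/

import Mathlib

open MeasureTheory Real Filter Topology

noncomputable section

namespace Corrosion

/-- The Bernoulli function `B(x) = x / (e^x - 1)`, `B(0) = 1`. -/
def Bern (x : ℝ) : ℝ := if x = 0 then 1 else x / (Real.exp x - 1)

/-- The two species: cations `P` and electrons `N`. -/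
inductive Sp | P | N

/-- charge numbers: `z_P = 3`, `z_N = -1`. -/
def z : Sp → ℝ
  | Sp.P => 3
  | Sp.N => -1

/-- A mesh of `[0,1]`: edge points `xe 0 = x_{1/2} = 0 < xe 1 = x_{3/2} < … < xe I = x_{I+1/2} = 1`. -/
structure Mesh where
  I : ℕ
  hI : 1 ≤ I
  xe : ℕ → ℝ
  xe0 : xe 0 = 0
  xeI : xe I = 1
  mono : ∀ j, j < I → xe j < xe (j + 1)

namespace Mesh

variable (m : Mesh)

/-- cell centers `x_i` for `1 ≤ i ≤ I` , with `x_0 = 0` and `x_{I+1} = 1`. -/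
def xc (i : ℕ) : ℝ :=
  if i = 0 then 0 else if i = m.I + 1 then 1 else (m.xe (i - 1) + m.xe i) / 2

/-- `h_i = x_{i+1/2} - x_{i-1/2}` for `1 ≤ i ≤ I`. -/
def h (i : ℕ) : ℝ := m.xe i - m.xe (i - 1)

/-- `h_{i+1/2} = x_{i+1} - x_i` for `0 ≤ i ≤ I`. -/
def hp (i : ℕ) : ℝ := m.xc (i + 1) - m.xc i

/-- mesh size `h = max_{1 ≤ i ≤ I} h_i`. -/
def size : ℝ := (Finset.Icc 1 m.I).sup' ⟨1, Finset.mem_Icc.mpr ⟨le_refl 1, m.hI⟩⟩ m.h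

/-- piecewise constant function associated to a vector `(w_i)_{0 ≤ i ≤ I+1}`:
equal to `w i` on `(x_{i-1/2}, x_{i+1/2})`, to `w 0` at `x = 0`, to `w (I+1)` at `x = 1`. -/
def pw (w : ℕ → ℝ) (x : ℝ) : ℝ :=
  if x = 0 then w 0 else if x = 1 then w (m.I + 1) else w (sInf {i : ℕ | x < m.xe i})

/-- square of the discrete `H¹` norm `‖w_h‖_{1,T}`. -/
def norm1sq (w : ℕ → ℝ) : ℝ :=
  (∑ i ∈ Finset.range (m.I + 1), (w (i + 1) - w i) ^ 2 / m.hp i) + w 0 ^ 2 + w (m.I + 1) ^ 2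

/-- square of the discrete `L²` norm `‖w_h‖_0`. -/
def norm0sq (w : ℕ → ℝ) : ℝ := ∑ i ∈ Finset.Icc 1 m.I, m.h i * w i ^ 2

/-- the discrete dual norm `‖w_h‖_{-1,2,T}`. -/
def normDual (w : ℕ → ℝ) : ℝ :=
  sSup {r : ℝ | ∃ v : ℕ → ℝ, m.norm1sq v ≤ 1 ∧
    r = ∫ x in Set.Ioo (0:ℝ) 1, m.pw w x * m.pw v x}

/-- piecewise constant space derivative: on `(x_i, x_{i+1})` it equals `(w_{i+1} - w_i)/h_{i+1/2}`. -/
def dpw (w : ℕ → ℝ) (x : ℝ) : ℝ :=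
  (w (sInf {i : ℕ | x < m.xc (i + 1)} + 1) - w (sInf {i : ℕ | x < m.xc (i + 1)})) /
    m.hp (sInf {i : ℕ | x < m.xc (i + 1)})

end Mesh

/-- All the data of the corrosion model. -/
structure Data where
  lam : ℝ
  eps : ℝ
  alpha0 : ℝ
  alpha1 : ℝ
  V : ℝ
  rho : ℝ
  dPsi0 : ℝ
  dPsi1 : ℝ
  umax : Sp → ℝ
  m0 : Sp → ℝ
  k0 : Sp → ℝ
  m1 : Sp → ℝ
  k1 : Sp → ℝ
  a0 : Sp → ℝ
  b0 : Sp → ℝ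
  a1 : Sp → ℝ
  b1 : Sp → ℝ
  u0 : Sp → ℝ → ℝ
  lam_pos : 0 < lam
  umax_pos : ∀ u, 0 < umax u
  m0_pos : ∀ u, 0 < m0 u
  k0_pos : ∀ u, 0 < k0 u
  m1_pos : ∀ u, 0 < m1 u
  k1_pos : ∀ u, 0 < k1 u
  a0_mem : ∀ u, a0 u ∈ Set.Icc (0:ℝ) 1
  b0_mem : ∀ u, b0 u ∈ Set.Icc (0:ℝ) 1
  a1_mem : ∀ u, a1 u ∈ Set.Icc (0:ℝ) 1
  b1_mem : ∀ u, b1 u ∈ Set.Icc (0:ℝ) 1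
  u0_meas : ∀ u, Measurable (u0 u)

namespace Data
variable (d : Data)

/-- `ε_P = 1`, `ε_N = ε`. -/
def epsu : Sp → ℝ
  | Sp.P => 1
  | Sp.N => d.eps

def beta0 (u : Sp) (x : ℝ) : ℝ :=
  d.m0 u * Real.exp (-(z u) * d.b0 u * x) + d.k0 u * Real.exp (z u * d.a0 u * x)

def beta1 (u : Sp) (x : ℝ) : ℝ :=
  d.m1 u * Real.exp (-(z u) * d.b1 u * x) + d.k1 u * Real.exp (z u * d.a1 u * x)

def gamma0 (u : Sp) (x : ℝ) : ℝ := d.m0 u * d.umax u * Real.exp (-(z u) * d.b0 u * x)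

def gamma1 (u : Sp) (x : ℝ) : ℝ := d.k1 u * d.umax u * Real.exp (z u * d.a1 u * x)

/-- Hypotheses (H). -/
def HypH : Prop :=
  (3 * d.umax Sp.P - d.umax Sp.N + d.rho = 0) ∧
  (∀ u, ∀ᵐ x ∂(volume.restrict (Set.Ioo (0:ℝ) 1)), 0 ≤ d.u0 u x ∧ d.u0 u x ≤ d.umax u) ∧
  (-(1 / (3 * d.a0 Sp.P)) * (1 + Real.log (d.alpha0 * d.a0 Sp.P * d.k0 Sp.P)) ≤ d.dPsi0 ∧
    d.dPsi0 ≤ (1 / d.a0 Sp.N) * (1 + Real.log (d.alpha0 * d.a0 Sp.N * d.k0 Sp.N))) ∧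
  (-(1 / d.b1 Sp.N) * (1 + Real.log (d.alpha1 * d.b1 Sp.N * d.m1 Sp.N)) ≤ d.dPsi1 ∧
    d.dPsi1 ≤ (1 / (3 * d.b1 Sp.P)) * (1 + Real.log (d.alpha1 * d.b1 Sp.P * d.m1 Sp.P)))

end Data

/-- `dΨ_{i+1/2} = (Ψ_{i+1} - Ψ_i)/h_{i+1/2}`. -/
def dPsiF (m : Mesh) (Psi : ℕ → ℝ) (i : ℕ) : ℝ := (Psi (i + 1) - Psi i) / m.hp i

/-- the Scharfetter-Gummel numerical flux `F_{u,i+1/2}`. -/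
def Flux (m : Mesh) (d : Data) (u : Sp) (Psi w : ℕ → ℝ) (i : ℕ) : ℝ :=
  (Bern (z u * m.hp i * dPsiF m Psi i) * w i -
    Bern (-(z u) * m.hp i * dPsiF m Psi i) * w (i + 1)) / m.hp i

/-- The fully implicit scheme (S), with time step `Δt = T / K`.
`sol u k i` is `u_i^k` (for `u = P, N`) and `Psi k i` is `Ψ_i^k`. -/
def Scheme (m : Mesh) (d : Data) (T : ℝ) (K : ℕ)
    (sol : Sp → ℕ → ℕ → ℝ) (Psi : ℕ → ℕ → ℝ) : Prop :=
  (∀ u i, 1 ≤ i → i ≤ m.I →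
    sol u 0 i = (1 / m.h i) * ∫ x in Set.Ioo (m.xe (i - 1)) (m.xe i), d.u0 u x) ∧
  (∀ k, k < K → ∀ i, 1 ≤ i → i ≤ m.I →
    -(d.lam ^ 2) * (dPsiF m (Psi (k + 1)) i - dPsiF m (Psi (k + 1)) (i - 1)) =
      m.h i * (3 * sol Sp.P (k + 1) i - sol Sp.N (k + 1) i + d.rho)) ∧
  (∀ u k, k < K → ∀ i, 1 ≤ i → i ≤ m.I →
    d.epsu u * m.h i * (sol u (k + 1) i - sol u k i) / (T / K) +
      Flux m d u (Psi (k + 1)) (sol u (k + 1)) i -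
      Flux m d u (Psi (k + 1)) (sol u (k + 1)) (i - 1) = 0) ∧
  (∀ k, k < K → Psi (k + 1) 0 - d.alpha0 * dPsiF m (Psi (k + 1)) 0 = d.dPsi0) ∧
  (∀ k, k < K →
    Psi (k + 1) (m.I + 1) + d.alpha1 * dPsiF m (Psi (k + 1)) m.I = d.V - d.dPsi1) ∧
  (∀ u k, k < K →
    -(Flux m d u (Psi (k + 1)) (sol u (k + 1)) 0) =
      d.beta0 u (Psi (k + 1) 0) * sol u (k + 1) 0 - d.gamma0 u (Psi (k + 1) 0)) ∧
  (∀ u k, k < K →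
    Flux m d u (Psi (k + 1)) (sol u (k + 1)) m.I =
      d.beta1 u (d.V - Psi (k + 1) (m.I + 1)) * sol u (k + 1) (m.I + 1) -
      d.gamma1 u (d.V - Psi (k + 1) (m.I + 1)))

/-- The stability property `0 ≤ u_i^k ≤ u^max` for all `i, k`. -/
def Stable (m : Mesh) (d : Data) (K : ℕ) (sol : Sp → ℕ → ℕ → ℝ) : Prop :=
  ∀ u k, k ≤ K → ∀ i, i ≤ m.I + 1 → 0 ≤ sol u k i ∧ sol u k i ≤ d.umax u

/-- the approximate space-time solution `w_{h,Δt}`, equal to the piecewise constant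
function built on `w^{k+1}` for `t ∈ [t^k, t^{k+1})`, with `Δt = T/K`. -/
def apx (m : Mesh) (T : ℝ) (K : ℕ) (w : ℕ → ℕ → ℝ) (x t : ℝ) : ℝ :=
  m.pw (w (Nat.floor (t / (T / K)) + 1)) x

/-- the discrete space derivative `∂_{x,T} w_{h,Δt}`. -/
def dapx (m : Mesh) (T : ℝ) (K : ℕ) (w : ℕ → ℕ → ℝ) (x t : ℝ) : ℝ :=
  m.dpw (w (Nat.floor (t / (T / K)) + 1)) x


/-- hyperbolic cotangent `coth y = cosh y / sinh y`. -/
def coth (x : ℝ) : ℝ := Real.cosh x / Real.sinh x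

/-- approximate trace at `x = 0`: `t ∈ [t^k, t^{k+1}) ↦ w_0^{k+1}`. -/
def trace0 (T : ℝ) (K : ℕ) (w : ℕ → ℕ → ℝ) (t : ℝ) : ℝ :=
  w (Nat.floor (t / (T / K)) + 1) 0

/-- approximate trace at `x = 1`: `t ∈ [t^k, t^{k+1}) ↦ w_{I+1}^{k+1}`. -/
def trace1 (m : Mesh) (T : ℝ) (K : ℕ) (w : ℕ → ℕ → ℝ) (t : ℝ) : ℝ :=
  w (Nat.floor (t / (T / K)) + 1) (m.I + 1)

/-- the measure on `(0,1) × (0,T)` (space × time). -/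
def stMeasure (T : ℝ) : MeasureTheory.Measure (ℝ × ℝ) :=
  (MeasureTheory.volume.restrict (Set.Ioo (0:ℝ) 1)).prod
    (MeasureTheory.volume.restrict (Set.Ioo (0:ℝ) T))

end Corrosion

section AuxLemmas

open MeasureTheory

namespace Corrosion
namespace Mesh

variable (m : Mesh)

lemma xe_lt {j k : ℕ} (hjk : j < k) (hk : k ≤ m.I) : m.xe j < m.xe k := by
  induction k with
  | zero => omega
  | succ n ih =>
    rcases Nat.lt_succ_iff_lt_or_eq.mp hjk with h | h
    · exact lt_trans (ih h (by omega)) (m.mono n (by omega))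
    · subst h; exact m.mono j (by omega)

lemma xe_le {j k : ℕ} (hjk : j ≤ k) (hk : k ≤ m.I) : m.xe j ≤ m.xe k := by
  rcases Nat.lt_or_ge j k with h | h
  · exact (m.xe_lt h hk).le
  · have : j = k := le_antisymm hjk h
    simp [this]

lemma xc_zero : m.xc 0 = 0 := by simp [Mesh.xc]

lemma xc_last : m.xc (m.I + 1) = 1 := by
  rw [Mesh.xc, if_neg (by omega), if_pos rfl]

lemma xc_mid {i : ℕ} (h1 : 1 ≤ i) (hi : i ≤ m.I) :
    m.xc i = (m.xe (i - 1) + m.xe i) / 2 := by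
  rw [Mesh.xc, if_neg (by omega), if_neg (by omega)]

lemma xc_mem {i : ℕ} (h1 : 1 ≤ i) (hi : i ≤ m.I) :
    m.xe (i - 1) < m.xc i ∧ m.xc i < m.xe i := by
  have hlt : m.xe (i - 1) < m.xe i := m.xe_lt (by omega) hi
  rw [m.xc_mid h1 hi]
  constructor <;> linarith

lemma xc_lt_succ {i : ℕ} (hi : i ≤ m.I) : m.xc i < m.xc (i + 1) := by
  rcases Nat.eq_zero_or_pos i with h0 | h1
  · subst h0
    rw [m.xc_zero]
    have h1I : (1 : ℕ) ≤ m.I := m.hI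
    have := (m.xc_mem le_rfl h1I).1
    have h0' : m.xe (1 - 1) = 0 := by simpa using m.xe0
    linarith [this, h0'.symm.le]
  · rcases Nat.lt_or_ge i m.I with hiI | hiI
    · -- 1 ≤ i, i + 1 ≤ m.I
      have e1 := m.xc_mid h1 hi
      have e2 := m.xc_mid (by omega) (by omega : i + 1 ≤ m.I)
      have h3 : (i + 1) - 1 = i := by omega
      rw [e1, e2, h3]
      have l1 : m.xe (i - 1) < m.xe i := m.xe_lt (by omega) hi
      have l2 : m.xe i < m.xe (i + 1) := m.xe_lt (by omega) (by omega)
      linarith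
    · have hiI' : i = m.I := le_antisymm hi hiI
      subst hiI'
      rw [m.xc_last]
      have := (m.xc_mem h1 le_rfl).2
      have := m.xeI
      linarith [(m.xc_mem h1 le_rfl).2, m.xeI.le]

lemma hp_pos {i : ℕ} (hi : i ≤ m.I) : 0 < m.hp i :=
  sub_pos.mpr (m.xc_lt_succ hi)

lemma sum_hp : ∑ i ∈ Finset.range (m.I + 1), m.hp i = 1 := by
  have h := Finset.sum_range_sub (fun i => m.xc i) (m.I + 1)
  simp only [Mesh.hp]
  rw [h, m.xc_last, m.xc_zero, sub_zero]

lemma h_pos {i : ℕ} (h1 : 1 ≤ i) (hi : i ≤ m.I) : 0 < m.h i :=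
  sub_pos.mpr (m.xe_lt (by omega) hi)

lemma h_le_size {i : ℕ} (h1 : 1 ≤ i) (hi : i ≤ m.I) : m.h i ≤ m.size :=
  Finset.le_sup' m.h (Finset.mem_Icc.mpr ⟨h1, hi⟩)

lemma sInf_cell {i : ℕ} {x : ℝ} (h1 : 1 ≤ i) (hi : i ≤ m.I)
    (hx1 : m.xe (i - 1) < x) (hx2 : x < m.xe i) :
    sInf {j : ℕ | x < m.xe j} = i := by
  have hmemi : i ∈ {j : ℕ | x < m.xe j} := hx2
  refine le_antisymm (Nat.sInf_le hmemi) ?_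
  by_contra hcon
  push_neg at hcon
  have hmem := Nat.sInf_mem (Set.nonempty_of_mem hmemi)
  have hle : m.xe (sInf {j : ℕ | x < m.xe j}) ≤ m.xe (i - 1) :=
    m.xe_le (by omega) (by omega)
  have : x < m.xe (i - 1) := lt_of_lt_of_le hmem hle
  linarith

lemma pw_eq_cell {i : ℕ} {x : ℝ} (h1 : 1 ≤ i) (hi : i ≤ m.I)
    (hx : x ∈ Set.Ioo (m.xe (i - 1)) (m.xe i)) (w : ℕ → ℝ) :
    m.pw w x = w i := by
  have hx0 : 0 < x := by
    have : m.xe 0 ≤ m.xe (i - 1) := m.xe_le (by omega) (by omega)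
    have := m.xe0
    linarith [hx.1]
  have hx1 : x < 1 := by
    have : m.xe i ≤ m.xe m.I := m.xe_le hi le_rfl
    have := m.xeI
    linarith [hx.2]
  rw [Mesh.pw, if_neg (by linarith), if_neg (by linarith),
    m.sInf_cell h1 hi hx.1 hx.2]

/-- step function equal a.e. to `pw`. -/
def stepw (w : ℕ → ℝ) (x : ℝ) : ℝ :=
  ∑ i ∈ Finset.Icc 1 m.I,
    Set.indicator (Set.Ioo (m.xe (i - 1)) (m.xe i)) (fun _ => w i) x

lemma stepw_eq_cell {i : ℕ} {x : ℝ} (h1 : 1 ≤ i) (hi : i ≤ m.I)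
    (hx : x ∈ Set.Ioo (m.xe (i - 1)) (m.xe i)) (w : ℕ → ℝ) :
    m.stepw w x = w i := by
  rw [stepw, Finset.sum_eq_single_of_mem i (Finset.mem_Icc.mpr ⟨h1, hi⟩)]
  · exact Set.indicator_of_mem hx _
  · intro j hj hji
    rw [Finset.mem_Icc] at hj
    apply Set.indicator_of_notMem
    intro hxj
    rcases lt_or_gt_of_ne hji with h | h
    · have hle : m.xe j ≤ m.xe (i - 1) := m.xe_le (by omega) (by omega)
      linarith [hx.1, hxj.2]
    · have hle : m.xe i ≤ m.xe (j - 1) := m.xe_le (by omega) (by omega)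
      linarith [hx.2, hxj.1]

lemma stepw_not_cell {x : ℝ}
    (hx : ∀ i, 1 ≤ i → i ≤ m.I → x ∉ Set.Ioo (m.xe (i - 1)) (m.xe i)) (w : ℕ → ℝ) :
    m.stepw w x = 0 := by
  rw [stepw]
  refine Finset.sum_eq_zero fun j hj => ?_
  rw [Finset.mem_Icc] at hj
  exact Set.indicator_of_notMem (hx j hj.1 hj.2) _

lemma stepw_measurable (w : ℕ → ℝ) : Measurable (m.stepw w) := by
  refine Finset.measurable_sum _ fun i _ => ?_
  exact Measurable.indicator measurable_const measurableSet_Ioo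

lemma stepw_abs_le {w : ℕ → ℝ} {C : ℝ} (hC : 0 ≤ C)
    (hw : ∀ i, 1 ≤ i → i ≤ m.I → |w i| ≤ C) (x : ℝ) : |m.stepw w x| ≤ C := by
  by_cases hx : ∃ i, 1 ≤ i ∧ i ≤ m.I ∧ x ∈ Set.Ioo (m.xe (i - 1)) (m.xe i)
  · obtain ⟨i, h1, hi, hmem⟩ := hx
    rw [m.stepw_eq_cell h1 hi hmem]
    exact hw i h1 hi
  · push_neg at hx
    rw [m.stepw_not_cell (fun i h1 hi => hx i h1 hi) w]
    simpa using hC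

lemma stepw_integrable (w : ℕ → ℝ) :
    Integrable (m.stepw w) (volume.restrict (Set.Ioo (0:ℝ) 1)) := by
  haveI : IsFiniteMeasure (volume.restrict (Set.Ioo (0:ℝ) 1)) :=
    ⟨by rw [Measure.restrict_apply_univ]; simp [Real.volume_Ioo]⟩
  refine integrable_finset_sum _ fun i _ => ?_
  exact (integrable_const (w i)).indicator measurableSet_Ioo

lemma stepw_bound (w : ℕ → ℝ) : ∃ C : ℝ, ∀ x, ‖m.stepw w x‖ ≤ C := by
  refine ⟨(Finset.Icc 1 m.I).sup' ⟨1, Finset.mem_Icc.mpr ⟨le_rfl, m.hI⟩⟩ (fun i => |w i|) ⊔ 0,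
    fun x => ?_⟩
  rw [Real.norm_eq_abs]
  apply m.stepw_abs_le (le_max_right _ _)
  intro i h1 hi
  exact le_trans (Finset.le_sup' (fun i => |w i|) (Finset.mem_Icc.mpr ⟨h1, hi⟩)) (le_max_left _ _)

lemma ae_cell : ∀ᵐ x ∂(volume.restrict (Set.Ioo (0:ℝ) 1)),
    ∃ i, 1 ≤ i ∧ i ≤ m.I ∧ x ∈ Set.Ioo (m.xe (i - 1)) (m.xe i) := by
  have hE : (volume.restrict (Set.Ioo (0:ℝ) 1))
      (⋃ j ∈ Finset.range (m.I + 1), {m.xe j}) = 0 := by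
    have hle := measure_biUnion_finset_le
      (μ := volume.restrict (Set.Ioo (0:ℝ) 1)) (Finset.range (m.I + 1))
      (fun j => ({m.xe j} : Set ℝ))
    refine le_antisymm (le_trans hle ?_) (by positivity)
    have hz : ∀ j ∈ Finset.range (m.I + 1),
        (volume.restrict (Set.Ioo (0:ℝ) 1)) ({m.xe j} : Set ℝ) = 0 := by
      intro j _
      rw [Measure.restrict_apply (measurableSet_singleton _)]
      exact measure_mono_null Set.inter_subset_left (measure_singleton _)
    rw [Finset.sum_congr rfl hz]
    simp
  filter_upwards [ae_restrict_mem measurableSet_Ioo,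
    (measure_eq_zero_iff_ae_notMem.mp hE)] with x hx hnx
  have hne : {j : ℕ | x < m.xe j}.Nonempty := ⟨m.I, by simpa [m.xeI] using hx.2⟩
  set i := sInf {j : ℕ | x < m.xe j} with hidef
  have hiS : x < m.xe i := Nat.sInf_mem hne
  have hile : i ≤ m.I := Nat.sInf_le (by simpa [m.xeI] using hx.2)
  have h1 : 1 ≤ i := by
    rcases Nat.eq_zero_or_pos i with h0 | h
    · rw [h0, m.xe0] at hiS; linarith [hx.1]
    · exact h
  have hge : m.xe (i - 1) ≤ x := by
    by_contra hcon
    push_neg at hcon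
    have : i ≤ i - 1 := Nat.sInf_le hcon
    omega
  have hnex : x ≠ m.xe (i - 1) := by
    intro heq
    apply hnx
    simp only [Set.mem_iUnion]
    exact ⟨i - 1, Finset.mem_range.mpr (by omega), by simpa using heq⟩
  exact ⟨i, h1, hile, lt_of_le_of_ne hge (Ne.symm hnex), hiS⟩

lemma pw_ae_eq (w : ℕ → ℝ) :
    m.pw w =ᵐ[volume.restrict (Set.Ioo (0:ℝ) 1)] m.stepw w := by
  filter_upwards [m.ae_cell] with x hx
  obtain ⟨i, h1, hi, hmem⟩ := hx
  rw [m.pw_eq_cell h1 hi hmem, m.stepw_eq_cell h1 hi hmem]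

lemma pw_smul (c : ℝ) (v : ℕ → ℝ) (x : ℝ) :
    m.pw (fun i => c * v i) x = c * m.pw v x := by
  rw [Mesh.pw, Mesh.pw]
  split_ifs <;> rfl

lemma norm1sq_smul (c : ℝ) (v : ℕ → ℝ) :
    m.norm1sq (fun i => c * v i) = c ^ 2 * m.norm1sq v := by
  rw [Mesh.norm1sq, Mesh.norm1sq]
  have h1 : ∀ j ∈ Finset.range (m.I + 1),
      (c * v (j + 1) - c * v j) ^ 2 / m.hp j = c ^ 2 * ((v (j + 1) - v j) ^ 2 / m.hp j) := by
    intro j _; ring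
  rw [Finset.sum_congr rfl h1, ← Finset.mul_sum]; ring

lemma v_bound {v : ℕ → ℝ} (hv : m.norm1sq v ≤ 1) {i : ℕ} (hi : i ≤ m.I + 1) :
    |v i| ≤ 2 := by
  have hterm : ∀ j ∈ Finset.range (m.I + 1), 0 ≤ (v (j + 1) - v j) ^ 2 / m.hp j := by
    intro j hj
    rw [Finset.mem_range] at hj
    exact div_nonneg (sq_nonneg _) (m.hp_pos (by omega)).le
  have hsum0 : 0 ≤ ∑ j ∈ Finset.range (m.I + 1), (v (j + 1) - v j) ^ 2 / m.hp j :=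
    Finset.sum_nonneg hterm
  rw [Mesh.norm1sq] at hv
  have hsum : ∑ j ∈ Finset.range (m.I + 1), (v (j + 1) - v j) ^ 2 / m.hp j ≤ 1 := by
    nlinarith [sq_nonneg (v 0), sq_nonneg (v (m.I + 1))]
  have hv0 : |v 0| ≤ 1 := by
    rw [abs_le]
    constructor <;>
      nlinarith [sq_nonneg (v (m.I + 1)), sq_nonneg (v 0 + 1), sq_nonneg (v 0 - 1)]
  -- Cauchy–Schwarz: ∑ |Δ| ≤ 1
  have habs : ∑ j ∈ Finset.range (m.I + 1), |v (j + 1) - v j| ≤ 1 := by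
    have hcs := Finset.sum_mul_sq_le_sq_mul_sq (Finset.range (m.I + 1))
      (fun j => Real.sqrt (m.hp j)) (fun j => |v (j + 1) - v j| / Real.sqrt (m.hp j))
    have e1 : ∀ j ∈ Finset.range (m.I + 1),
        Real.sqrt (m.hp j) * (|v (j + 1) - v j| / Real.sqrt (m.hp j)) = |v (j + 1) - v j| := by
      intro j hj
      rw [Finset.mem_range] at hj
      rw [mul_div_cancel₀]
      exact (Real.sqrt_pos.mpr (m.hp_pos (by omega))).ne'
    have e2 : ∀ j ∈ Finset.range (m.I + 1), Real.sqrt (m.hp j) ^ 2 = m.hp j := by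
      intro j hj
      rw [Finset.mem_range] at hj
      exact Real.sq_sqrt (m.hp_pos (by omega)).le
    have e3 : ∀ j ∈ Finset.range (m.I + 1),
        (|v (j + 1) - v j| / Real.sqrt (m.hp j)) ^ 2 = (v (j + 1) - v j) ^ 2 / m.hp j := by
      intro j hj
      rw [Finset.mem_range] at hj
      rw [div_pow, sq_abs, Real.sq_sqrt (m.hp_pos (by omega)).le]
    rw [Finset.sum_congr rfl e1, Finset.sum_congr rfl e2, Finset.sum_congr rfl e3,
      m.sum_hp, one_mul] at hcs
    have habs0 : 0 ≤ ∑ j ∈ Finset.range (m.I + 1), |v (j + 1) - v j| :=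
      Finset.sum_nonneg fun j _ => abs_nonneg _
    nlinarith
  have hvi : v i = v 0 + ∑ j ∈ Finset.range i, (v (j + 1) - v j) := by
    rw [Finset.sum_range_sub]; ring
  have hsub : ∑ j ∈ Finset.range i, |v (j + 1) - v j| ≤
      ∑ j ∈ Finset.range (m.I + 1), |v (j + 1) - v j| := by
    apply Finset.sum_le_sum_of_subset_of_nonneg
    · exact Finset.range_subset_range.mpr hi
    · intro j _ _; exact abs_nonneg _
  calc |v i| = |v 0 + ∑ j ∈ Finset.range i, (v (j + 1) - v j)| := by rw [← hvi]
    _ ≤ |v 0| + |∑ j ∈ Finset.range i, (v (j + 1) - v j)| := abs_add_le _ _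
    _ ≤ |v 0| + ∑ j ∈ Finset.range i, |v (j + 1) - v j| := by
        gcongr; exact Finset.abs_sum_le_sum_abs _ _
    _ ≤ 1 + 1 := by
        gcongr
        exact le_trans hsub habs
    _ = 2 := by norm_num

lemma norm1sq_discretize (g : ℝ → ℝ) (L : NNReal) (hLip : LipschitzWith L g) :
    m.norm1sq (fun i => g (m.xc i)) ≤ (L : ℝ) ^ 2 + g 0 ^ 2 + g 1 ^ 2 := by
  rw [Mesh.norm1sq, m.xc_zero, m.xc_last]
  have hsum : ∑ j ∈ Finset.range (m.I + 1),
      (g (m.xc (j + 1)) - g (m.xc j)) ^ 2 / m.hp j ≤ (L : ℝ) ^ 2 := by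
    calc ∑ j ∈ Finset.range (m.I + 1), (g (m.xc (j + 1)) - g (m.xc j)) ^ 2 / m.hp j
        ≤ ∑ j ∈ Finset.range (m.I + 1), (L : ℝ) ^ 2 * m.hp j := by
          apply Finset.sum_le_sum
          intro j hj
          rw [Finset.mem_range] at hj
          have hpj : 0 < m.hp j := m.hp_pos (by omega)
          have hd := hLip.dist_le_mul (m.xc (j + 1)) (m.xc j)
          rw [Real.dist_eq, Real.dist_eq] at hd
          have habs : |m.xc (j + 1) - m.xc j| = m.hp j := abs_of_pos hpj
          rw [habs] at hd
          rw [div_le_iff₀ hpj]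
          nlinarith [hd, abs_nonneg (g (m.xc (j + 1)) - g (m.xc j)),
            sq_abs (g (m.xc (j + 1)) - g (m.xc j)), hpj]
      _ = (L : ℝ) ^ 2 := by rw [← Finset.mul_sum, m.sum_hp, mul_one]
  linarith

lemma abs_le_normDual (w v : ℕ → ℝ) (hv : m.norm1sq v ≤ 1) :
    |∫ x in Set.Ioo (0:ℝ) 1, m.pw w x * m.pw v x| ≤ m.normDual w := by
  haveI : IsFiniteMeasure (volume.restrict (Set.Ioo (0:ℝ) 1)) :=
    ⟨by rw [Measure.restrict_apply_univ]; simp [Real.volume_Ioo]⟩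
  set S : Set ℝ := {r : ℝ | ∃ v' : ℕ → ℝ, m.norm1sq v' ≤ 1 ∧
    r = ∫ x in Set.Ioo (0:ℝ) 1, m.pw w x * m.pw v' x} with hS
  have hint : ∀ v' : ℕ → ℝ,
      Integrable (fun x => m.stepw w x * m.stepw v' x) (volume.restrict (Set.Ioo (0:ℝ) 1)) := by
    intro v'
    have hb : ∃ C, ∀ x, ‖m.stepw v' x‖ ≤ C := by
      refine ⟨(Finset.Icc 1 m.I).sup' ⟨1, Finset.mem_Icc.mpr ⟨le_rfl, m.hI⟩⟩ (fun i => |v' i|) ⊔ 0, fun x => ?_⟩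
      rw [Real.norm_eq_abs]
      apply m.stepw_abs_le (le_max_right _ _)
      intro i h1 hi
      exact le_trans (Finset.le_sup' (fun i => |v' i|) (Finset.mem_Icc.mpr ⟨h1, hi⟩)) (le_max_left _ _)
    have := hb.elim fun Cb hCb => (m.stepw_integrable w).bdd_mul ((m.stepw_measurable v').aestronglyMeasurable) (Filter.Eventually.of_forall hCb)
    refine this.congr (Filter.Eventually.of_forall fun x => ?_)
    ring
  have hbdd : BddAbove S := by
    refine ⟨∫ x in Set.Ioo (0:ℝ) 1, |m.stepw w x| * 2, ?_⟩
    rintro r ⟨v', hv', rfl⟩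
    have heq : ∫ x in Set.Ioo (0:ℝ) 1, m.pw w x * m.pw v' x =
        ∫ x in Set.Ioo (0:ℝ) 1, m.stepw w x * m.stepw v' x :=
      integral_congr_ae ((m.pw_ae_eq w).mul (m.pw_ae_eq v'))
    rw [heq]
    apply integral_mono (hint v') ((m.stepw_integrable w).abs.mul_const 2)
    intro x
    have h1 : m.stepw w x * m.stepw v' x ≤ |m.stepw w x * m.stepw v' x| := le_abs_self _
    rw [abs_mul] at h1
    have h2 : |m.stepw v' x| ≤ 2 := by
      apply m.stepw_abs_le (by norm_num)
      intro i hi1 hi2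
      exact m.v_bound hv' (by omega)
    have h3 : 0 ≤ |m.stepw w x| := abs_nonneg _
    have h4 : 0 ≤ |m.stepw v' x| := abs_nonneg _
    show m.stepw w x * m.stepw v' x ≤ |m.stepw w x| * 2
    nlinarith
  have hmem1 : (∫ x in Set.Ioo (0:ℝ) 1, m.pw w x * m.pw v x) ∈ S := ⟨v, hv, rfl⟩
  have h1 : (∫ x in Set.Ioo (0:ℝ) 1, m.pw w x * m.pw v x) ≤ m.normDual w :=
    le_csSup hbdd hmem1
  have h2 : -(∫ x in Set.Ioo (0:ℝ) 1, m.pw w x * m.pw v x) ≤ m.normDual w := by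
    have hveq : m.norm1sq (fun i => (-1 : ℝ) * v i) ≤ 1 := by
      rw [m.norm1sq_smul]; simpa using hv
    have heq : -(∫ x in Set.Ioo (0:ℝ) 1, m.pw w x * m.pw v x) =
        ∫ x in Set.Ioo (0:ℝ) 1, m.pw w x * m.pw (fun i => (-1 : ℝ) * v i) x := by
      rw [← integral_neg]
      apply integral_congr_ae
      apply Filter.Eventually.of_forall
      intro x
      show -(m.pw w x * m.pw v x) = m.pw w x * m.pw (fun i => (-1 : ℝ) * v i) x
      rw [m.pw_smul]; ring
    rw [heq]
    exact le_csSup hbdd ⟨_, hveq, rfl⟩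
  exact abs_le.mpr ⟨by linarith, h1⟩

end Mesh
end Corrosion

end AuxLemmas

open Corrosion in
/-- if `w_{h_m} → w` in `L²(0,1)` and `‖w_{h_m}‖_{-1,2,T_m} → 0` then `w = 0`. -/
theorem dual_norm_limit_zero
    (msh : ℕ → Mesh) (hsz : Filter.Tendsto (fun n => (msh n).size) Filter.atTop (nhds 0))
    (w : ℕ → ℕ → ℝ) (wlim : ℝ → ℝ)
    (hmem : MemLp wlim 2 (volume.restrict (Set.Ioo (0:ℝ) 1)))
    (hconv : Filter.Tendsto
      (fun n => ∫ x in Set.Ioo (0:ℝ) 1, ((msh n).pw (w n) x - wlim x) ^ 2)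
      Filter.atTop (nhds 0))
    (hdual : Filter.Tendsto (fun n => (msh n).normDual (w n)) Filter.atTop (nhds 0)) :
    ∀ᵐ x ∂(volume.restrict (Set.Ioo (0:ℝ) 1)), wlim x = 0 := by
  classical
  haveI hfin : IsFiniteMeasure (volume.restrict (Set.Ioo (0:ℝ) 1)) :=
    ⟨by rw [Measure.restrict_apply_univ]; simp [Real.volume_Ioo]⟩
  have hμuniv : ((volume.restrict (Set.Ioo (0:ℝ) 1)) Set.univ).toReal = 1 := by
    rw [Measure.restrict_apply_univ]; simp [Real.volume_Ioo]
  have hwlim_int : Integrable wlim (volume.restrict (Set.Ioo (0:ℝ) 1)) :=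
    hmem.integrable (by norm_num)
  apply ae_eq_zero_of_integral_contDiff_smul_eq_zero
    hwlim_int.locallyIntegrable
  intro g hg hgsupp
  obtain ⟨L, hLip⟩ := ContDiff.lipschitzWith_of_hasCompactSupport hgsupp hg (by simp)
  obtain ⟨M, hM⟩ := hg.continuous.bounded_above_of_compact_support hgsupp
  have hM0 : 0 ≤ M := le_trans (norm_nonneg _) (hM 0)
  set C : ℝ := (L : ℝ) ^ 2 + g 0 ^ 2 + g 1 ^ 2 + 1 with hCdef
  have hCpos : 0 < C := by positivity
  have hspos : 0 < Real.sqrt C := Real.sqrt_pos.mpr hCpos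
  set v : ℕ → ℕ → ℝ := fun n i => g ((msh n).xc i) with hvdef
  -- Step 1: the discrete duality bound
  have hbound : ∀ n, |∫ x in Set.Ioo (0:ℝ) 1, (msh n).pw (w n) x * (msh n).pw (v n) x|
      ≤ Real.sqrt C * (msh n).normDual (w n) := by
    intro n
    have hnorm : (msh n).norm1sq (fun i => (1 / Real.sqrt C) * v n i) ≤ 1 := by
      rw [Mesh.norm1sq_smul]
      have h1 := (msh n).norm1sq_discretize g L hLip
      rw [div_pow, one_pow, Real.sq_sqrt hCpos.le]
      rw [div_mul_eq_mul_div, one_mul, div_le_one hCpos]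
      calc (msh n).norm1sq (fun i => g ((msh n).xc i)) ≤ (L : ℝ) ^ 2 + g 0 ^ 2 + g 1 ^ 2 := h1
        _ ≤ C := by rw [hCdef]; linarith
    have h := (msh n).abs_le_normDual (w n) _ hnorm
    have heq : (∫ x in Set.Ioo (0:ℝ) 1,
          (msh n).pw (w n) x * (msh n).pw (fun i => (1 / Real.sqrt C) * v n i) x)
        = (1 / Real.sqrt C) * ∫ x in Set.Ioo (0:ℝ) 1, (msh n).pw (w n) x * (msh n).pw (v n) x := by
      rw [← integral_const_mul]
      apply integral_congr_ae
      apply Filter.Eventually.of_forall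
      intro x
      show (msh n).pw (w n) x * (msh n).pw (fun i => (1 / Real.sqrt C) * v n i) x
        = 1 / Real.sqrt C * ((msh n).pw (w n) x * (msh n).pw (v n) x)
      rw [Mesh.pw_smul]; ring
    rw [heq, abs_mul, abs_of_pos (by positivity : (0:ℝ) < 1 / Real.sqrt C)] at h
    rw [div_mul_eq_mul_div, one_mul, div_le_iff₀ hspos] at h
    calc |∫ x in Set.Ioo (0:ℝ) 1, (msh n).pw (w n) x * (msh n).pw (v n) x|
        ≤ (msh n).normDual (w n) * Real.sqrt C := h
      _ = Real.sqrt C * (msh n).normDual (w n) := mul_comm _ _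
  have tendA : Filter.Tendsto
      (fun n => ∫ x in Set.Ioo (0:ℝ) 1, (msh n).pw (w n) x * (msh n).pw (v n) x)
      Filter.atTop (nhds 0) := by
    have hlim : Filter.Tendsto (fun n => Real.sqrt C * (msh n).normDual (w n))
        Filter.atTop (nhds 0) := by
      have := hdual.const_mul (Real.sqrt C)
      simpa using this
    refine squeeze_zero_norm (fun n => ?_) hlim
    rw [Real.norm_eq_abs]
    exact hbound n
  -- Step 2: integrability preliminaries
  have hsVb : ∀ n x, ‖(msh n).stepw (v n) x‖ ≤ M := by
    intro n x
    rw [Real.norm_eq_abs]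
    apply (msh n).stepw_abs_le hM0
    intro i _ _
    simpa [Real.norm_eq_abs] using hM ((msh n).xc i)
  have int_sW : ∀ n, Integrable ((msh n).stepw (w n)) (volume.restrict (Set.Ioo (0:ℝ) 1)) :=
    fun n => (msh n).stepw_integrable (w n)
  have i1 : ∀ n, Integrable
      (fun x => (msh n).stepw (v n) x * ((msh n).stepw (w n) x - wlim x))
      (volume.restrict (Set.Ioo (0:ℝ) 1)) := by
    intro n
    exact ((int_sW n).sub hwlim_int).bdd_mul
      ((msh n).stepw_measurable (v n)).aestronglyMeasurable (Filter.Eventually.of_forall (hsVb n))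
  have i2 : ∀ n, Integrable
      (fun x => ((msh n).stepw (v n) x - g x) * wlim x)
      (volume.restrict (Set.Ioo (0:ℝ) 1)) := by
    intro n
    refine hwlim_int.bdd_mul (c := M + M)
      (((msh n).stepw_measurable (v n)).sub hg.continuous.measurable).aestronglyMeasurable
      (Filter.Eventually.of_forall fun x => ?_)
    calc ‖(msh n).stepw (v n) x - g x‖ ≤ ‖(msh n).stepw (v n) x‖ + ‖g x‖ := norm_sub_le _ _
      _ ≤ M + M := add_le_add (hsVb n x) (hM x)
  have i3 : Integrable (fun x => g x * wlim x) (volume.restrict (Set.Ioo (0:ℝ) 1)) :=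
    hwlim_int.bdd_mul hg.continuous.measurable.aestronglyMeasurable (Filter.Eventually.of_forall hM)
  -- Step 3: decomposition
  have decomp : ∀ n, (∫ x in Set.Ioo (0:ℝ) 1, (msh n).pw (w n) x * (msh n).pw (v n) x)
      = (∫ x in Set.Ioo (0:ℝ) 1, (msh n).stepw (v n) x * ((msh n).stepw (w n) x - wlim x))
        + (∫ x in Set.Ioo (0:ℝ) 1, ((msh n).stepw (v n) x - g x) * wlim x)
        + ∫ x in Set.Ioo (0:ℝ) 1, g x * wlim x := by
    intro n
    have e2 : (∫ x in Set.Ioo (0:ℝ) 1,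
          (((msh n).stepw (v n) x - g x) * wlim x + g x * wlim x))
        = (∫ x in Set.Ioo (0:ℝ) 1, ((msh n).stepw (v n) x - g x) * wlim x)
          + ∫ x in Set.Ioo (0:ℝ) 1, g x * wlim x := integral_add (i2 n) i3
    have e1 : (∫ x in Set.Ioo (0:ℝ) 1,
          ((msh n).stepw (v n) x * ((msh n).stepw (w n) x - wlim x)
            + (((msh n).stepw (v n) x - g x) * wlim x + g x * wlim x)))
        = (∫ x in Set.Ioo (0:ℝ) 1, (msh n).stepw (v n) x * ((msh n).stepw (w n) x - wlim x))
          + ∫ x in Set.Ioo (0:ℝ) 1,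
              (((msh n).stepw (v n) x - g x) * wlim x + g x * wlim x) :=
      integral_add (i1 n) ((i2 n).add i3)
    have e0 : (∫ x in Set.Ioo (0:ℝ) 1, (msh n).pw (w n) x * (msh n).pw (v n) x)
        = ∫ x in Set.Ioo (0:ℝ) 1,
            ((msh n).stepw (v n) x * ((msh n).stepw (w n) x - wlim x)
              + (((msh n).stepw (v n) x - g x) * wlim x + g x * wlim x)) := by
      apply integral_congr_ae
      filter_upwards [((msh n).pw_ae_eq (w n)).mul ((msh n).pw_ae_eq (v n))] with x hx
      simp only [Pi.mul_apply] at hx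
      rw [hx]
      ring
    rw [e0, e1, e2]
    ring
  -- Step 4: T1 tends to 0 (Cauchy-Schwarz)
  have hconj : Real.HolderConjugate 2 2 := ⟨by norm_num, by norm_num, by norm_num⟩
  have hof2 :(ENNReal.ofReal 2) = 2 := by rw [ENNReal.ofReal_ofNat]
  have hsqe : ∀ (u : ℝ → ℝ) (x : ℝ), ‖u x‖ ^ (2:ℝ) = u x ^ 2 := by
    intro u x
    rw [Real.rpow_two, Real.norm_eq_abs, sq_abs]
  have hT1b : ∀ n, ‖∫ x in Set.Ioo (0:ℝ) 1,
      (msh n).stepw (v n) x * ((msh n).stepw (w n) x - wlim x)‖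
      ≤ M * Real.sqrt (∫ x in Set.Ioo (0:ℝ) 1, ((msh n).pw (w n) x - wlim x) ^ 2) := by
    intro n
    set sV := (msh n).stepw (v n) with hsVdef
    set f : ℝ → ℝ := fun x => (msh n).stepw (w n) x - wlim x with hfdef
    have hmemV : MemLp sV (ENNReal.ofReal 2) (volume.restrict (Set.Ioo (0:ℝ) 1)) :=
      MemLp.of_bound ((msh n).stepw_measurable (v n)).aestronglyMeasurable M
        (Filter.Eventually.of_forall (hsVb n))
    have hmemF : MemLp f (ENNReal.ofReal 2) (volume.restrict (Set.Ioo (0:ℝ) 1)) := by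
      rw [hof2]
      obtain ⟨Cw, hCw⟩ := (msh n).stepw_bound (w n)
      exact (MemLp.of_bound ((msh n).stepw_measurable (w n)).aestronglyMeasurable Cw
        (Filter.Eventually.of_forall hCw)).sub hmem
    have hH := MeasureTheory.integral_mul_norm_le_Lp_mul_Lq
      (μ := volume.restrict (Set.Ioo (0:ℝ) 1)) hconj hmemV hmemF
    rw [show (∫ x in Set.Ioo (0:ℝ) 1, ‖sV x‖ ^ (2:ℝ)) = ∫ x in Set.Ioo (0:ℝ) 1, sV x ^ 2 from
        integral_congr_ae (Filter.Eventually.of_forall fun x => hsqe sV x),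
      show (∫ x in Set.Ioo (0:ℝ) 1, ‖f x‖ ^ (2:ℝ)) = ∫ x in Set.Ioo (0:ℝ) 1, f x ^ 2 from
        integral_congr_ae (Filter.Eventually.of_forall fun x => hsqe f x),
      ← Real.sqrt_eq_rpow, ← Real.sqrt_eq_rpow] at hH
    have hstep1 : ‖∫ x in Set.Ioo (0:ℝ) 1, sV x * f x‖
        ≤ ∫ x in Set.Ioo (0:ℝ) 1, ‖sV x‖ * ‖f x‖ := by
      calc ‖∫ x in Set.Ioo (0:ℝ) 1, sV x * f x‖
          ≤ ∫ x in Set.Ioo (0:ℝ) 1, ‖sV x * f x‖ := norm_integral_le_integral_norm _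
        _ = ∫ x in Set.Ioo (0:ℝ) 1, ‖sV x‖ * ‖f x‖ := by
            apply integral_congr_ae
            exact Filter.Eventually.of_forall fun x => norm_mul _ _
    have h1 : Real.sqrt (∫ x in Set.Ioo (0:ℝ) 1, sV x ^ 2) ≤ M := by
      have hle : (∫ x in Set.Ioo (0:ℝ) 1, sV x ^ 2) ≤ M ^ 2 := by
        have hconst : (∫ _x in Set.Ioo (0:ℝ) 1, (M:ℝ) ^ 2) = M ^ 2 := by
          rw [integral_const, smul_eq_mul, measureReal_def, hμuniv, one_mul]
        rw [← hconst]
        apply integral_mono ?_ (integrable_const _)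
        · intro x
          show sV x ^ 2 ≤ M ^ 2
          have hb : |sV x| ≤ M := hsVb n x
          have h0 : (0:ℝ) ≤ |sV x| := abs_nonneg _
          nlinarith [sq_abs (sV x)]
        · have hmemV2 : MemLp sV 2 (volume.restrict (Set.Ioo (0:ℝ) 1)) := hof2 ▸ hmemV
          exact hmemV2.integrable_sq
      calc Real.sqrt (∫ x in Set.Ioo (0:ℝ) 1, sV x ^ 2) ≤ Real.sqrt (M ^ 2) :=
            Real.sqrt_le_sqrt hle
        _ = M := by rw [Real.sqrt_sq hM0]
    have h2 : (∫ x in Set.Ioo (0:ℝ) 1, f x ^ 2)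
        = ∫ x in Set.Ioo (0:ℝ) 1, ((msh n).pw (w n) x - wlim x) ^ 2 := by
      apply integral_congr_ae
      filter_upwards [(msh n).pw_ae_eq (w n)] with x hx
      rw [hfdef]
      simp only []
      rw [hx]
    rw [h2] at hH
    calc ‖∫ x in Set.Ioo (0:ℝ) 1, sV x * f x‖
        ≤ ∫ x in Set.Ioo (0:ℝ) 1, ‖sV x‖ * ‖f x‖ := hstep1
      _ ≤ Real.sqrt (∫ x in Set.Ioo (0:ℝ) 1, sV x ^ 2) *
            Real.sqrt (∫ x in Set.Ioo (0:ℝ) 1, ((msh n).pw (w n) x - wlim x) ^ 2) := hH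
      _ ≤ M * Real.sqrt (∫ x in Set.Ioo (0:ℝ) 1, ((msh n).pw (w n) x - wlim x) ^ 2) :=
            mul_le_mul_of_nonneg_right h1 (Real.sqrt_nonneg _)
  have tendT1 : Filter.Tendsto (fun n => ∫ x in Set.Ioo (0:ℝ) 1,
      (msh n).stepw (v n) x * ((msh n).stepw (w n) x - wlim x)) Filter.atTop (nhds 0) := by
    have hsqrt : Filter.Tendsto (fun n => Real.sqrt
        (∫ x in Set.Ioo (0:ℝ) 1, ((msh n).pw (w n) x - wlim x) ^ 2)) Filter.atTop (nhds 0) := by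
      have := (Real.continuous_sqrt.tendsto 0).comp hconv
      simpa [Function.comp_def] using this
    have hlim : Filter.Tendsto (fun n => M * Real.sqrt
        (∫ x in Set.Ioo (0:ℝ) 1, ((msh n).pw (w n) x - wlim x) ^ 2)) Filter.atTop (nhds 0) := by
      have := hsqrt.const_mul M
      simpa using this
    exact squeeze_zero_norm hT1b hlim
  -- Step 5: T2 tends to 0
  have hT2b : ∀ n, ‖∫ x in Set.Ioo (0:ℝ) 1, ((msh n).stepw (v n) x - g x) * wlim x‖
      ≤ ((L : ℝ) * (msh n).size) * ∫ x in Set.Ioo (0:ℝ) 1, |wlim x| := by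
    intro n
    have hdiff : ∀ᵐ x ∂(volume.restrict (Set.Ioo (0:ℝ) 1)),
        |(msh n).stepw (v n) x - g x| ≤ (L : ℝ) * (msh n).size := by
      filter_upwards [(msh n).ae_cell] with x hx
      obtain ⟨i, h1, hi, hmem'⟩ := hx
      rw [(msh n).stepw_eq_cell h1 hi hmem']
      have hd := hLip.dist_le_mul ((msh n).xc i) x
      rw [Real.dist_eq, Real.dist_eq] at hd
      have hxc := (msh n).xc_mem h1 hi
      have hhdef : (msh n).h i = (msh n).xe i - (msh n).xe (i - 1) := rfl
      have hh : |(msh n).xc i - x| ≤ (msh n).h i := by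
        rw [abs_le, hhdef]
        constructor <;> [linarith [hmem'.2, hxc.1]; linarith [hmem'.1, hxc.2]]
      have hsize : (msh n).h i ≤ (msh n).size := (msh n).h_le_size h1 hi
      calc |g ((msh n).xc i) - g x| ≤ (L : ℝ) * |(msh n).xc i - x| := hd
        _ ≤ (L : ℝ) * (msh n).size := by
            apply mul_le_mul_of_nonneg_left (le_trans hh hsize) L.coe_nonneg
    calc ‖∫ x in Set.Ioo (0:ℝ) 1, ((msh n).stepw (v n) x - g x) * wlim x‖
        ≤ ∫ x in Set.Ioo (0:ℝ) 1, ‖((msh n).stepw (v n) x - g x) * wlim x‖ :=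
          norm_integral_le_integral_norm _
      _ ≤ ∫ x in Set.Ioo (0:ℝ) 1, ((L : ℝ) * (msh n).size) * |wlim x| := by
          apply integral_mono_ae (i2 n).norm (hwlim_int.abs.const_mul _)
          filter_upwards [hdiff] with x hx
          rw [norm_mul, Real.norm_eq_abs, Real.norm_eq_abs]
          exact mul_le_mul_of_nonneg_right hx (abs_nonneg _)
      _ = ((L : ℝ) * (msh n).size) * ∫ x in Set.Ioo (0:ℝ) 1, |wlim x| := integral_const_mul _ _
  have tendT2 : Filter.Tendsto (fun n => ∫ x in Set.Ioo (0:ℝ) 1,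
      ((msh n).stepw (v n) x - g x) * wlim x) Filter.atTop (nhds 0) := by
    have h1 : Filter.Tendsto (fun n => (L : ℝ) * (msh n).size) Filter.atTop (nhds 0) := by
      have := hsz.const_mul (L : ℝ)
      simpa using this
    have hlim : Filter.Tendsto (fun n => ((L : ℝ) * (msh n).size)
        * ∫ x in Set.Ioo (0:ℝ) 1, |wlim x|) Filter.atTop (nhds 0) := by
      have := h1.mul_const (∫ x in Set.Ioo (0:ℝ) 1, |wlim x|)
      simpa using this
    exact squeeze_zero_norm hT2b hlim
  -- Step 6: conclusion
  have tendSum : Filter.Tendsto (fun n =>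
      (∫ x in Set.Ioo (0:ℝ) 1, (msh n).stepw (v n) x * ((msh n).stepw (w n) x - wlim x))
      + (∫ x in Set.Ioo (0:ℝ) 1, ((msh n).stepw (v n) x - g x) * wlim x)
      + ∫ x in Set.Ioo (0:ℝ) 1, g x * wlim x) Filter.atTop
      (nhds (∫ x in Set.Ioo (0:ℝ) 1, g x * wlim x)) := by
    have := (tendT1.add tendT2).add_const (∫ x in Set.Ioo (0:ℝ) 1, g x * wlim x)
    simpa using this
  have hzero : (∫ x in Set.Ioo (0:ℝ) 1, g x * wlim x) = 0 := by
    apply tendsto_nhds_unique (tendSum.congr fun n => (decomp n).symm) tendA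
  simpa [smul_eq_mul] using hzero
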